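/- Let n ≥ 1 and let f_1,…,f_n : ℝ^d → ℝ be differentiable, with f_i being μ_i-strongly convex for some μ_i > 0. Let x⋆ be the unique minimizer of f := (1/n)Σ_{i=1}^n f_i, let 𝒮 be a proper, nonvacuous sampling over the subsets of [n], and define μ_AS := min_{C ⊆ [n], p_C > 0} Σ_{i∈C} μ_i/(n p_i) and σ²_{⋆,AS} := Σ_{C ⊆ [n], p_C > 0} p_C ‖∇f_C(x⋆)‖². Fix b > 0, γ > 0, and s > 0 with s < γ²μ_AS² + 2γμ_AS. Let x_0 ∈ ℝ^d be deterministic, let (S_t)_{t≥0} be independent random sets each distributed according to 𝒮, and let the iterates be given by x_{t+1} = T_t(x_t, S_t), where each T_t is a measurable map satisfying ‖T_t(x, C) − prox_{γ f_C}(x)‖² ≤ b for every x ∈ ℝ^d and every admissible C (an inexact proximal oracle of accuracy b). Then for every t ≥ 0, E[‖x_t − x⋆‖²] ≤ ((1+s)/(1+γμ_AS)²)^t·‖x_0 − x⋆‖² + (1+s)(γ²σ²_{⋆,AS} + s^{−1}b(1+γμ_AS)²)/(γ²μ_AS² + 2γμ_AS − s). -/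

import Mathlib

open RealInnerProductSpace

set_option maxHeartbeats 4000000

section Helpers

variable {F : Type*} [NormedAddCommGroup F] [InnerProductSpace ℝ F] [CompleteSpace F]

lemma hasGradientAt_const_mul_norm_sq' (c : ℝ) (a z : F) :
    HasGradientAt (fun y => c * ‖y - a‖ ^ 2) ((2 * c) • (z - a)) z := by
  have h1 : HasFDerivAt (fun y : F => y - a) (ContinuousLinearMap.id ℝ F) z :=
    (hasFDerivAt_id z).sub_const a
  have h2 := ((h1.inner ℝ h1).const_mul c)
  rw [hasGradientAt_iff_hasFDerivAt]
  have heq : (fun y : F => c * ‖y - a‖ ^ 2) = fun y => c * ⟪y - a, y - a⟫ := by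
    funext y; rw [real_inner_self_eq_norm_sq]
  rw [heq]
  refine h2.congr_fderiv ?_
  ext v
  simp [fderivInnerCLM, inner_sub_left, inner_sub_right, real_inner_comm]
  ring

lemma hasGradientAt_weighted_sum' {ι : Type*} (S : Finset ι) (c : ι → ℝ)
    (f : ι → F → ℝ) (g : ι → F) (x : F) (h : ∀ i ∈ S, HasGradientAt (f i) (g i) x) :
    HasGradientAt (fun y => ∑ i ∈ S, c i * f i y) (∑ i ∈ S, c i • g i) x := by
  rw [hasGradientAt_iff_hasFDerivAt]
  have h2 : HasFDerivAt (fun y => ∑ i ∈ S, c i * f i y)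
      (∑ i ∈ S, c i • (InnerProductSpace.toDual ℝ F (g i) : F →L[ℝ] ℝ)) x :=
    HasFDerivAt.fun_sum fun i hi => ((h i hi).hasFDerivAt).const_mul (c i)
  refine h2.congr_fderiv ?_
  simp [map_sum, map_smul]

lemma gradient_eq_zero_of_min' {φ : F → ℝ} {g x : F}
    (hφ : HasGradientAt φ g x) (hm : ∀ y, φ x ≤ φ y) : g = 0 := by
  have hloc : IsLocalMin φ x := Filter.Eventually.of_forall fun y => hm y
  have h0 := hloc.hasFDerivAt_eq_zero hφ.hasFDerivAt
  have : InnerProductSpace.toDual ℝ F g = 0 := by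
    ext v; exact congrFun (congrArg DFunLike.coe h0) v
  simpa using congrArg (InnerProductSpace.toDual ℝ F).symm this

end Helpers

/-- Inexact SPPM-AS: if every proximal step is computed up to squared error `b`, then
`E‖x_t - x⋆‖² ≤ ((1+s)/(1+γμ_AS)²)^t ‖x_0 - x⋆‖²
  + (1+s)(γ²σ²_{⋆,AS} + s⁻¹ b (1+γμ_AS)²)/(γ²μ_AS² + 2γμ_AS - s)`. -/
theorem inexact_sppm_as_convergence
    {n d : ℕ} (hn : 1 ≤ n)
    (f : Fin n → EuclideanSpace ℝ (Fin d) → ℝ)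
    (f' : Fin n → EuclideanSpace ℝ (Fin d) → EuclideanSpace ℝ (Fin d))
    (hdiff : ∀ i y, HasGradientAt (f i) (f' i y) y)
    (μs : Fin n → ℝ) (hμpos : ∀ i, 0 < μs i)
    (hsc : ∀ (i : Fin n) (y z : EuclideanSpace ℝ (Fin d)),
      f i y + ⟪f' i y, z - y⟫ + μs i / 2 * ‖z - y‖ ^ 2 ≤ f i z)
    (xstar : EuclideanSpace ℝ (Fin d))
    (hmin : ∀ y, (n : ℝ)⁻¹ * ∑ i, f i xstar ≤ (n : ℝ)⁻¹ * ∑ i, f i y)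
    -- the sampling distribution 𝒮, nonvacuous and proper
    (p : Finset (Fin n) → ℝ) (hp0 : ∀ S, 0 ≤ p S)
    (hp1 : ∑ S : Finset (Fin n), p S = 1) (hvac : p ∅ = 0)
    (pc : Fin n → ℝ)
    (hpc : ∀ i, pc i = ∑ S ∈ Finset.univ.filter (fun S : Finset (Fin n) => i ∈ S), p S)
    (hproper : ∀ i, 0 < pc i)
    -- μ_AS and σ²_{⋆,AS}
    (μAS : ℝ)
    (hμAS_le : ∀ S : Finset (Fin n), 0 < p S → μAS ≤ ∑ i ∈ S, μs i / ((n : ℝ) * pc i))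
    (hμAS_mem : ∃ S : Finset (Fin n), 0 < p S ∧ μAS = ∑ i ∈ S, μs i / ((n : ℝ) * pc i))
    (σ2 : ℝ)
    (hσ2 : σ2 = ∑ S : Finset (Fin n), p S * ‖∑ i ∈ S, ((n : ℝ) * pc i)⁻¹ • f' i xstar‖ ^ 2)
    -- constants
    (γ berr s : ℝ) (hγ : 0 < γ) (hberr : 0 < berr) (hs0 : 0 < s)
    (hs : s < γ ^ 2 * μAS ^ 2 + 2 * γ * μAS)
    -- the exact proximity operator of γ f_C
    (prox : Finset (Fin n) → EuclideanSpace ℝ (Fin d) → EuclideanSpace ℝ (Fin d))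
    (hprox : ∀ S : Finset (Fin n), 0 < p S → ∀ x z : EuclideanSpace ℝ (Fin d),
      (∑ i ∈ S, ((n : ℝ) * pc i)⁻¹ * f i (prox S x)) + (1 / (2 * γ)) * ‖prox S x - x‖ ^ 2 ≤
        (∑ i ∈ S, ((n : ℝ) * pc i)⁻¹ * f i z) + (1 / (2 * γ)) * ‖z - x‖ ^ 2)
    -- the inexact proximal oracle of accuracy `berr`
    (T : ℕ → EuclideanSpace ℝ (Fin d) → Finset (Fin n) → EuclideanSpace ℝ (Fin d))
    (hT : ∀ (t : ℕ) (x : EuclideanSpace ℝ (Fin d)) (S : Finset (Fin n)), 0 < p S →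
      ‖T t x S - prox S x‖ ^ 2 ≤ berr)
    -- the iterates, as a function of the history of sampled cohorts
    (x0 : EuclideanSpace ℝ (Fin d))
    (X : (t : ℕ) → (Fin t → Finset (Fin n)) → EuclideanSpace ℝ (Fin d))
    (hX0 : ∀ σ, X 0 σ = x0)
    (hXrec : ∀ (t : ℕ) (σ : Fin (t + 1) → Finset (Fin n)),
      X (t + 1) σ = T t (X t (fun j => σ j.castSucc)) (σ (Fin.last t))) :
    ∀ t : ℕ,
      (∑ σ : Fin t → Finset (Fin n), (∏ j, p (σ j)) * ‖X t σ - xstar‖ ^ 2) ≤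
        ((1 + s) / (1 + γ * μAS) ^ 2) ^ t * ‖x0 - xstar‖ ^ 2 +
          (1 + s) * (γ ^ 2 * σ2 + s⁻¹ * berr * (1 + γ * μAS) ^ 2) /
            (γ ^ 2 * μAS ^ 2 + 2 * γ * μAS - s) := by
  classical
  have hnR : (0:ℝ) < n := by exact_mod_cast Nat.lt_of_lt_of_le Nat.zero_lt_one hn
  have hcpos : ∀ i : Fin n, 0 < ((n : ℝ) * pc i)⁻¹ :=
    fun i => inv_pos.2 (mul_pos hnR (hproper i))
  have hμASpos : 0 < μAS := by
    obtain ⟨S, hpS, hEq⟩ := hμAS_mem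
    have hSne : S.Nonempty := by
      rcases S.eq_empty_or_nonempty with h | h
      · exfalso; rw [h] at hpS; rw [hvac] at hpS; exact lt_irrefl _ hpS
      · exact h
    rw [hEq]
    exact Finset.sum_pos (fun i _ => div_pos (hμpos i) (mul_pos hnR (hproper i))) hSne
  have h1γ : (0:ℝ) < 1 + γ * μAS := by positivity
  -- strong convexity of the subsampled objective
  have hssum : ∀ (S : Finset (Fin n)) (y z : EuclideanSpace ℝ (Fin d)),
      (∑ i ∈ S, ((n : ℝ) * pc i)⁻¹ * f i y) +
        ⟪∑ i ∈ S, ((n : ℝ) * pc i)⁻¹ • f' i y, z - y⟫ +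
        (∑ i ∈ S, μs i / ((n : ℝ) * pc i)) / 2 * ‖z - y‖ ^ 2 ≤
      ∑ i ∈ S, ((n : ℝ) * pc i)⁻¹ * f i z := by
    intro S y z
    have h2 := Finset.sum_le_sum (fun i (_ : i ∈ S) =>
      mul_le_mul_of_nonneg_left (hsc i y z) (hcpos i).le)
    have e1 : ⟪∑ i ∈ S, ((n : ℝ) * pc i)⁻¹ • f' i y, z - y⟫
        = ∑ i ∈ S, ((n : ℝ) * pc i)⁻¹ * ⟪f' i y, z - y⟫ := by
      rw [sum_inner]
      exact Finset.sum_congr rfl fun i _ => real_inner_smul_left _ _ _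
    have e2 : (∑ i ∈ S, μs i / ((n : ℝ) * pc i)) / 2 * ‖z - y‖ ^ 2
        = ∑ i ∈ S, ((n : ℝ) * pc i)⁻¹ * (μs i / 2 * ‖z - y‖ ^ 2) := by
      rw [Finset.sum_div, Finset.sum_mul]
      refine Finset.sum_congr rfl fun i _ => ?_
      field_simp
    rw [e1, e2, ← Finset.sum_add_distrib, ← Finset.sum_add_distrib]
    calc ∑ i ∈ S, (((n : ℝ) * pc i)⁻¹ * f i y + ((n : ℝ) * pc i)⁻¹ * ⟪f' i y, z - y⟫
            + ((n : ℝ) * pc i)⁻¹ * (μs i / 2 * ‖z - y‖ ^ 2))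
        = ∑ i ∈ S, ((n : ℝ) * pc i)⁻¹ * (f i y + ⟪f' i y, z - y⟫ + μs i / 2 * ‖z - y‖ ^ 2) :=
          Finset.sum_congr rfl fun i _ => by ring
      _ ≤ _ := h2
  -- stationarity of the prox
  have hstat : ∀ S : Finset (Fin n), 0 < p S → ∀ x : EuclideanSpace ℝ (Fin d),
      (∑ i ∈ S, ((n : ℝ) * pc i)⁻¹ • f' i (prox S x)) + γ⁻¹ • (prox S x - x) = 0 := by
    intro S hpS x
    have h1 := hasGradientAt_weighted_sum' S (fun i => ((n : ℝ) * pc i)⁻¹) f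
      (fun i => f' i (prox S x)) (prox S x) (fun i _ => hdiff i (prox S x))
    have h2 := hasGradientAt_const_mul_norm_sq' (1/(2*γ)) x (prox S x)
    have h3 : γ⁻¹ • (prox S x - x) = (2 * (1/(2*γ))) • (prox S x - x) := by
      congr 1; field_simp
    have hgrad : HasGradientAt
        (fun z => (∑ i ∈ S, ((n : ℝ) * pc i)⁻¹ * f i z) + (1/(2*γ)) * ‖z - x‖ ^ 2)
        ((∑ i ∈ S, ((n : ℝ) * pc i)⁻¹ • f' i (prox S x)) + γ⁻¹ • (prox S x - x))
        (prox S x) := by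
      rw [h3, hasGradientAt_iff_hasFDerivAt, map_add]
      exact HasFDerivAt.add h1.hasFDerivAt h2.hasFDerivAt
    exact gradient_eq_zero_of_min' hgrad (fun z => hprox S hpS x z)
  -- contraction of the exact prox step
  have hcontr : ∀ S : Finset (Fin n), 0 < p S → ∀ x : EuclideanSpace ℝ (Fin d),
      ‖prox S x - xstar‖ ^ 2 ≤
        ((1 + γ * μAS) ^ 2)⁻¹ *
          ‖x - xstar - γ • (∑ i ∈ S, ((n : ℝ) * pc i)⁻¹ • f' i xstar)‖ ^ 2 := by
    intro S hpS x
    set q := prox S x with hq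
    set u : EuclideanSpace ℝ (Fin d) := q - xstar with hu
    set w : EuclideanSpace ℝ (Fin d) :=
      x - xstar - γ • (∑ i ∈ S, ((n : ℝ) * pc i)⁻¹ • f' i xstar) with hw
    set gq : EuclideanSpace ℝ (Fin d) := ∑ i ∈ S, ((n : ℝ) * pc i)⁻¹ • f' i q with hgq
    set gstar : EuclideanSpace ℝ (Fin d) := ∑ i ∈ S, ((n : ℝ) * pc i)⁻¹ • f' i xstar with hgs
    have hM : μAS ≤ ∑ i ∈ S, μs i / ((n : ℝ) * pc i) := hμAS_le S hpS
    have hA := hssum S q xstar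
    have hB := hssum S xstar q
    have hkey : (1 + γ * μAS) * ‖u‖ ^ 2 ≤ ⟪w, u⟫ := by
      have hst := hstat S hpS x
      have hgq_eq : gq = γ⁻¹ • (x - q) := by
        have : gq = -(γ⁻¹ • (q - x)) := by
          rw [eq_neg_iff_add_eq_zero]; exact hst
        rw [this, ← smul_neg, neg_sub]
      have hn1 : ‖xstar - q‖ = ‖u‖ := by rw [hu, norm_sub_rev]
      have hadd : ⟪gq, xstar - q⟫ + ⟪gstar, q - xstar⟫
          + (∑ i ∈ S, μs i / ((n : ℝ) * pc i)) * ‖u‖ ^ 2 ≤ 0 := by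
        have h1 : ⟪gq, xstar - q⟫ + (∑ i ∈ S, μs i / ((n : ℝ) * pc i)) / 2 * ‖u‖ ^ 2 ≤
            (∑ i ∈ S, ((n : ℝ) * pc i)⁻¹ * f i xstar) -
              ∑ i ∈ S, ((n : ℝ) * pc i)⁻¹ * f i q := by
          rw [← hn1]; linarith [hA]
        have h2 : ⟪gstar, q - xstar⟫ + (∑ i ∈ S, μs i / ((n : ℝ) * pc i)) / 2 * ‖u‖ ^ 2 ≤
            (∑ i ∈ S, ((n : ℝ) * pc i)⁻¹ * f i q) -
              ∑ i ∈ S, ((n : ℝ) * pc i)⁻¹ * f i xstar := by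
          linarith [hB]
        linarith
      have hinner1 : ⟪gq, xstar - q⟫ = -(γ⁻¹ * (⟪x - xstar, u⟫ - ‖u‖ ^ 2)) := by
        rw [hgq_eq, show xstar - q = -u by rw [hu, neg_sub], inner_neg_right,
          real_inner_smul_left]
        have : ⟪x - q, u⟫ = ⟪x - xstar, u⟫ - ‖u‖ ^ 2 := by
          rw [show x - q = (x - xstar) - u by rw [hu]; abel, inner_sub_left,
            real_inner_self_eq_norm_sq]
        rw [this]
      have hinner2 : ⟪w, u⟫ = ⟪x - xstar, u⟫ - γ * ⟪gstar, u⟫ := by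
        rw [hw, inner_sub_left, real_inner_smul_left]
      have hgsu : ⟪gstar, q - xstar⟫ = ⟪gstar, u⟫ := by rw [hu]
      rw [hinner1, hgsu] at hadd
      have hγ' : (0:ℝ) < γ⁻¹ := inv_pos.2 hγ
      have hMu : μAS * ‖u‖ ^ 2 ≤ (∑ i ∈ S, μs i / ((n : ℝ) * pc i)) * ‖u‖ ^ 2 :=
        mul_le_mul_of_nonneg_right hM (sq_nonneg _)
      have hmulγ : γ * (γ⁻¹ * (⟪x - xstar, u⟫ - ‖u‖ ^ 2)) = ⟪x - xstar, u⟫ - ‖u‖ ^ 2 := by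
        field_simp
      clear hsc hdiff hmin hprox hT hXrec hX0 hpc hμAS_le hμAS_mem hσ2 hssum hstat
      clear hA hB hp0 hp1 hvac hproper hμpos
      nlinarith [mul_le_mul_of_nonneg_left hadd hγ.le]
    have hcs : ⟪w, u⟫ ≤ ‖w‖ * ‖u‖ := real_inner_le_norm w u
    rcases eq_or_lt_of_le (norm_nonneg u) with h0 | h0
    · have hz : ‖u‖ ^ 2 = 0 := by rw [← h0]; ring
      rw [hz]
      positivity
    · have hle : (1 + γ * μAS) * ‖u‖ ≤ ‖w‖ := by
        have h4 := hkey.trans hcs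
        have h5 : (1 + γ * μAS) * ‖u‖ * ‖u‖ ≤ ‖w‖ * ‖u‖ := by
          have h6 : (1 + γ * μAS) * ‖u‖ * ‖u‖ = (1 + γ * μAS) * ‖u‖ ^ 2 := by ring
          rw [h6]; exact h4
        exact le_of_mul_le_mul_right h5 h0
      have hsq : ((1 + γ * μAS) * ‖u‖) ^ 2 ≤ ‖w‖ ^ 2 :=
        pow_le_pow_left₀ (by positivity) hle 2
      have h2 : (1 + γ * μAS) ^ 2 * ‖u‖ ^ 2 ≤ ‖w‖ ^ 2 := by rw [mul_pow] at hsq; exact hsq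
      have h3 : ((1 + γ * μAS) ^ 2)⁻¹ * ((1 + γ * μAS) ^ 2 * ‖u‖ ^ 2) ≤
          ((1 + γ * μAS) ^ 2)⁻¹ * ‖w‖ ^ 2 := mul_le_mul_of_nonneg_left h2 (by positivity)
      calc ‖u‖ ^ 2 = ((1 + γ * μAS) ^ 2)⁻¹ * ((1 + γ * μAS) ^ 2 * ‖u‖ ^ 2) := by
            field_simp
        _ ≤ _ := h3
  -- gradient of f is zero at xstar
  have hsum0 : (∑ i : Fin n, (n : ℝ)⁻¹ • f' i xstar) = 0 := by
    have hgrad := hasGradientAt_weighted_sum' Finset.univ (fun _ : Fin n => (n : ℝ)⁻¹) f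
      (fun i => f' i xstar) xstar (fun i _ => hdiff i xstar)
    refine gradient_eq_zero_of_min' hgrad ?_
    intro y
    simpa [Finset.mul_sum] using hmin y
  -- mean of subsampled gradients is zero
  have hgbar : (∑ S : Finset (Fin n), p S • (∑ i ∈ S, ((n : ℝ) * pc i)⁻¹ • f' i xstar)) = 0 := by
    have step1 : (∑ S : Finset (Fin n), p S • (∑ i ∈ S, ((n : ℝ) * pc i)⁻¹ • f' i xstar))
        = ∑ S : Finset (Fin n), ∑ i : Fin n,
            (if i ∈ S then (p S * ((n : ℝ) * pc i)⁻¹) • f' i xstar else 0) := by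
      refine Finset.sum_congr rfl fun S _ => ?_
      rw [Finset.smul_sum]
      rw [Finset.sum_ite_mem, Finset.univ_inter]
      refine Finset.sum_congr rfl fun i _ => ?_
      rw [smul_smul]
    rw [step1, Finset.sum_comm]
    have step2 : ∀ i : Fin n,
        (∑ S : Finset (Fin n), if i ∈ S then (p S * ((n : ℝ) * pc i)⁻¹) • f' i xstar else 0)
          = (n : ℝ)⁻¹ • f' i xstar := by
      intro i
      rw [← Finset.sum_filter, ← Finset.sum_smul, ← Finset.sum_mul, ← hpc i]
      have hne : pc i ≠ 0 := (hproper i).ne'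
      have hne2 : (n : ℝ) ≠ 0 := hnR.ne'
      congr 1
      field_simp
    rw [Finset.sum_congr rfl fun i _ => step2 i]
    exact hsum0
  -- expectation identity
  have hexp : ∀ u : EuclideanSpace ℝ (Fin d),
      ∑ S : Finset (Fin n), p S * ‖u - γ • (∑ i ∈ S, ((n : ℝ) * pc i)⁻¹ • f' i xstar)‖ ^ 2
        = ‖u‖ ^ 2 + γ ^ 2 * σ2 := by
    intro u
    have expand : ∀ S : Finset (Fin n),
        p S * ‖u - γ • (∑ i ∈ S, ((n : ℝ) * pc i)⁻¹ • f' i xstar)‖ ^ 2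
          = p S * ‖u‖ ^ 2
            - 2 * γ * ⟪u, p S • (∑ i ∈ S, ((n : ℝ) * pc i)⁻¹ • f' i xstar)⟫
            + γ ^ 2 * (p S * ‖∑ i ∈ S, ((n : ℝ) * pc i)⁻¹ • f' i xstar‖ ^ 2) := by
      intro S
      rw [norm_sub_sq_real, real_inner_smul_right, norm_smul, real_inner_smul_right]
      simp [Real.norm_eq_abs, abs_of_pos hγ]
      ring
    have hzero : (∑ S : Finset (Fin n),
        2 * γ * ⟪u, p S • (∑ i ∈ S, ((n : ℝ) * pc i)⁻¹ • f' i xstar)⟫) = 0 := by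
      rw [← Finset.mul_sum, ← inner_sum, hgbar, inner_zero_right, mul_zero]
    rw [Finset.sum_congr rfl fun S _ => expand S, Finset.sum_add_distrib,
      Finset.sum_sub_distrib, ← Finset.sum_mul, hp1, hzero, ← Finset.mul_sum, ← hσ2]
    ring
  have hσ2nn : 0 ≤ σ2 := by
    rw [hσ2]
    exact Finset.sum_nonneg fun S _ => mul_nonneg (hp0 S) (sq_nonneg _)
  -- shorthand constants
  set q : ℝ := (1 + s) * ((1 + γ * μAS) ^ 2)⁻¹ with hqdef
  set K : ℝ := (1 + s) * (γ ^ 2 * σ2 + s⁻¹ * berr * (1 + γ * μAS) ^ 2) /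
      (γ ^ 2 * μAS ^ 2 + 2 * γ * μAS - s) with hKdef
  set cc : ℝ := q * (γ ^ 2 * σ2) + (1 + s⁻¹) * berr with hccdef
  have hqpos : 0 < q := by positivity
  have hD : (0:ℝ) < γ ^ 2 * μAS ^ 2 + 2 * γ * μAS - s := by linarith
  have hKnn : 0 ≤ K := by
    rw [hKdef]
    apply div_nonneg _ hD.le
    have h1 : 0 ≤ γ ^ 2 * σ2 := mul_nonneg (by positivity) hσ2nn
    have h2 : 0 ≤ s⁻¹ * berr * (1 + γ * μAS) ^ 2 := by positivity
    have h3 : (0:ℝ) ≤ 1 + s := by linarith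
    exact mul_nonneg h3 (by linarith)
  have hccnn : 0 ≤ cc := by
    rw [hccdef]
    have : 0 ≤ q * (γ ^ 2 * σ2) := by positivity
    have h2 : 0 ≤ (1 + s⁻¹) * berr := by positivity
    linarith
  have hKrec : q * K + cc = K := by
    rw [hqdef, hKdef, hccdef, hqdef]
    have hs' : s ≠ 0 := hs0.ne'
    have h1γ' : (1 + γ * μAS) ≠ 0 := h1γ.ne'
    have hD' : γ * μAS * (γ * μAS + 2) - s ≠ 0 := by nlinarith
    field_simp
    ring
  -- one-step bound at a fixed point
  have hstep : ∀ (t : ℕ) (x : EuclideanSpace ℝ (Fin d)),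
      ∑ S : Finset (Fin n), p S * ‖T t x S - xstar‖ ^ 2 ≤ q * ‖x - xstar‖ ^ 2 + cc := by
    intro t x
    have young : ∀ S : Finset (Fin n), 0 < p S → ‖T t x S - xstar‖ ^ 2 ≤
        (1 + s) * ‖prox S x - xstar‖ ^ 2 + (1 + s⁻¹) * berr := by
      intro S hpS
      have htri : ‖T t x S - xstar‖ ≤ ‖T t x S - prox S x‖ + ‖prox S x - xstar‖ := by
        have : T t x S - xstar = (T t x S - prox S x) + (prox S x - xstar) := by abel
        rw [this]; exact norm_add_le _ _
      have hb := hT t x S hpS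
      have h1 : ‖T t x S - xstar‖ ^ 2
          ≤ (‖T t x S - prox S x‖ + ‖prox S x - xstar‖) ^ 2 :=
        pow_le_pow_left₀ (norm_nonneg _) htri 2
      have hsi : s * s⁻¹ = 1 := mul_inv_cancel₀ hs0.ne'
      nlinarith [sq_nonneg (‖T t x S - prox S x‖ - s * ‖prox S x - xstar‖),
        mul_pos hs0 (inv_pos.2 hs0), norm_nonneg (T t x S - prox S x),
        norm_nonneg (prox S x - xstar), inv_pos.2 hs0]
    have term1 : ∀ S : Finset (Fin n), p S * ‖T t x S - xstar‖ ^ 2 ≤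
        p S * ((1 + s) * ‖prox S x - xstar‖ ^ 2 + (1 + s⁻¹) * berr) := by
      intro S
      rcases (hp0 S).eq_or_lt with h | h
      · rw [← h]; simp
      · exact mul_le_mul_of_nonneg_left (young S h) (hp0 S)
    have term2 : ∀ S : Finset (Fin n), p S * ‖prox S x - xstar‖ ^ 2 ≤
        p S * (((1 + γ * μAS) ^ 2)⁻¹ *
          ‖x - xstar - γ • (∑ i ∈ S, ((n : ℝ) * pc i)⁻¹ • f' i xstar)‖ ^ 2) := by
      intro S
      rcases (hp0 S).eq_or_lt with h | h
      · rw [← h]; simp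
      · exact mul_le_mul_of_nonneg_left (hcontr S h x) (hp0 S)
    calc ∑ S : Finset (Fin n), p S * ‖T t x S - xstar‖ ^ 2
        ≤ ∑ S : Finset (Fin n),
            p S * ((1 + s) * ‖prox S x - xstar‖ ^ 2 + (1 + s⁻¹) * berr) :=
          Finset.sum_le_sum fun S _ => term1 S
      _ = (1 + s) * ∑ S : Finset (Fin n), p S * ‖prox S x - xstar‖ ^ 2
            + (1 + s⁻¹) * berr := by
          have hterm : ∀ S : Finset (Fin n),
              p S * ((1 + s) * ‖prox S x - xstar‖ ^ 2 + (1 + s⁻¹) * berr)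
                = (1 + s) * (p S * ‖prox S x - xstar‖ ^ 2) + p S * ((1 + s⁻¹) * berr) :=
            fun S => by ring
          rw [Finset.sum_congr rfl fun S _ => hterm S, Finset.sum_add_distrib,
            ← Finset.mul_sum, ← Finset.sum_mul, hp1, one_mul]
      _ ≤ (1 + s) * ∑ S : Finset (Fin n), p S * (((1 + γ * μAS) ^ 2)⁻¹ *
            ‖x - xstar - γ • (∑ i ∈ S, ((n : ℝ) * pc i)⁻¹ • f' i xstar)‖ ^ 2)
            + (1 + s⁻¹) * berr := by
          have := Finset.sum_le_sum fun S (_ : S ∈ Finset.univ) => term2 S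
          have h1s : (0:ℝ) ≤ 1 + s := by linarith
          exact add_le_add_left (mul_le_mul_of_nonneg_left this h1s) _
      _ = q * ‖x - xstar‖ ^ 2 + cc := by
          have : ∑ S : Finset (Fin n), p S * (((1 + γ * μAS) ^ 2)⁻¹ *
              ‖x - xstar - γ • (∑ i ∈ S, ((n : ℝ) * pc i)⁻¹ • f' i xstar)‖ ^ 2)
              = ((1 + γ * μAS) ^ 2)⁻¹ * (‖x - xstar‖ ^ 2 + γ ^ 2 * σ2) := by
            rw [← hexp (x - xstar), Finset.mul_sum]
            exact Finset.sum_congr rfl fun S _ => by ring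
          rw [this, hqdef, hccdef, hqdef]
          ring
  -- sum of weights over histories is one
  have hw1 : ∀ t : ℕ, (∑ σ : Fin t → Finset (Fin n), ∏ j, p (σ j)) = 1 := by
    intro t
    rw [← Fintype.piFinset_univ, ← Finset.prod_univ_sum]
    simp [hp1]
  have hwnn : ∀ (t : ℕ) (σ : Fin t → Finset (Fin n)), 0 ≤ ∏ j, p (σ j) :=
    fun t σ => Finset.prod_nonneg fun j _ => hp0 (σ j)
  -- expectation recursion
  have hE : ∀ t : ℕ,
      (∑ σ : Fin (t+1) → Finset (Fin n), (∏ j, p (σ j)) * ‖X (t+1) σ - xstar‖ ^ 2) ≤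
        q * (∑ σ : Fin t → Finset (Fin n), (∏ j, p (σ j)) * ‖X t σ - xstar‖ ^ 2) + cc := by
    intro t
    have hsnoc : (∑ σ : Fin (t+1) → Finset (Fin n), (∏ j, p (σ j)) * ‖X (t+1) σ - xstar‖ ^ 2)
        = ∑ pr : Finset (Fin n) × (Fin t → Finset (Fin n)),
            (∏ j, p (pr.2 j)) * (p pr.1 * ‖T t (X t pr.2) pr.1 - xstar‖ ^ 2) := by
      rw [← Fintype.sum_equiv (Fin.snocEquiv (fun _ : Fin (t+1) => Finset (Fin n)))
        (fun pr => (∏ j, p (pr.2 j)) * (p pr.1 * ‖T t (X t pr.2) pr.1 - xstar‖ ^ 2))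
        (fun σ => (∏ j, p (σ j)) * ‖X (t+1) σ - xstar‖ ^ 2) ?_]
      rintro ⟨S, σ'⟩
      have hse : (Fin.snocEquiv (fun _ : Fin (t+1) => Finset (Fin n))) (S, σ')
          = Fin.snoc σ' S := by
        funext j; simp [Fin.snocEquiv]
      rw [hse]
      dsimp only
      rw [hXrec t]
      simp only [Fin.snoc_castSucc, Fin.snoc_last, Fin.prod_univ_castSucc]
      ring
    rw [hsnoc, Fintype.sum_prod_type_right]
    calc ∑ σ' : Fin t → Finset (Fin n), ∑ S : Finset (Fin n),
            (∏ j, p (σ' j)) * (p S * ‖T t (X t σ') S - xstar‖ ^ 2)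
        = ∑ σ' : Fin t → Finset (Fin n), (∏ j, p (σ' j)) *
            ∑ S : Finset (Fin n), p S * ‖T t (X t σ') S - xstar‖ ^ 2 := by
          exact Finset.sum_congr rfl fun σ' _ => by rw [Finset.mul_sum]
      _ ≤ ∑ σ' : Fin t → Finset (Fin n), (∏ j, p (σ' j)) *
            (q * ‖X t σ' - xstar‖ ^ 2 + cc) :=
          Finset.sum_le_sum fun σ' _ =>
            mul_le_mul_of_nonneg_left (hstep t (X t σ')) (hwnn t σ')
      _ = q * (∑ σ' : Fin t → Finset (Fin n), (∏ j, p (σ' j)) * ‖X t σ' - xstar‖ ^ 2)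
            + cc * (∑ σ' : Fin t → Finset (Fin n), ∏ j, p (σ' j)) := by
          rw [Finset.mul_sum, Finset.mul_sum, ← Finset.sum_add_distrib]
          exact Finset.sum_congr rfl fun σ' _ => by ring
      _ = _ := by rw [hw1 t, mul_one]
  -- initial value
  have hE0 : (∑ σ : Fin 0 → Finset (Fin n), (∏ j, p (σ j)) * ‖X 0 σ - xstar‖ ^ 2)
      = ‖x0 - xstar‖ ^ 2 := by
    haveI : Unique (Fin 0 → Finset (Fin n)) :=
      ⟨⟨fun i => i.elim0⟩, fun σ => funext fun i => i.elim0⟩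
    rw [Fintype.sum_unique]
    simp [hX0]
  -- induction
  have key : ∀ t : ℕ,
      (∑ σ : Fin t → Finset (Fin n), (∏ j, p (σ j)) * ‖X t σ - xstar‖ ^ 2) ≤
        q ^ t * ‖x0 - xstar‖ ^ 2 + K := by
    intro t
    induction t with
    | zero => rw [hE0]; simp; linarith [hKnn]
    | succ t ih =>
        calc (∑ σ : Fin (t+1) → Finset (Fin n), (∏ j, p (σ j)) * ‖X (t+1) σ - xstar‖ ^ 2)
            ≤ q * (∑ σ : Fin t → Finset (Fin n), (∏ j, p (σ j)) * ‖X t σ - xstar‖ ^ 2) + cc :=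
              hE t
          _ ≤ q * (q ^ t * ‖x0 - xstar‖ ^ 2 + K) + cc :=
              add_le_add_left (mul_le_mul_of_nonneg_left ih hqpos.le) _
          _ = q ^ (t+1) * ‖x0 - xstar‖ ^ 2 + (q * K + cc) := by ring
          _ = q ^ (t+1) * ‖x0 - xstar‖ ^ 2 + K := by rw [hKrec]
  intro t
  have := key t
  rw [hqdef, ← div_eq_mul_inv] at this
  rw [hKdef] at this
  exact this
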